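/- For every integer k ≥ 1, k! · 4^k · e^{1/25 - 1/6} / √(πk) ≤ (2k)!/k! ≤ k! · 4^k / √(πk). -/

import Mathlib

open Real

open Stirling Filter Topology in
private lemma stirling_pos' (k : ℕ) (hk : 1 ≤ k) : 0 < stirlingSeq k := by
  have hk0 : (0:ℝ) < k := by exact_mod_cast hk
  rw [stirlingSeq]
  positivity

open Stirling Filter Topology in
private lemma sqrt_pi_le_stirling (k : ℕ) (hk : 1 ≤ k) : Real.sqrt π ≤ stirlingSeq k := by
  obtain ⟨n, rfl⟩ := Nat.exists_eq_add_of_le hk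
  have h : Real.sqrt π ≤ (stirlingSeq ∘ Nat.succ) n :=
    stirlingSeq'_antitone.le_of_tendsto
      (tendsto_stirlingSeq_sqrt_pi.comp (tendsto_add_atTop_nat 1)) n
  simpa [Function.comp, Nat.succ_eq_add_one, add_comm] using h

open Stirling Filter Topology in
private lemma stirling_step (n : ℕ) :
    Real.log (stirlingSeq (n+1)) - Real.log (stirlingSeq (n+2)) ≤
      1/(4*((n:ℝ)+1)) - 1/(4*((n:ℝ)+2)) := by
  refine (log_stirlingSeq_diff_le_geo_sum n).trans (le_of_eq ?_)
  have h1 : (0:ℝ) < 2*((n:ℝ)+1)+1 := by positivity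
  have h2 : (1:ℝ) - (1/(2*((n:ℝ)+1)+1))^2 ≠ 0 := by
    have : (1/(2*((n:ℝ)+1)+1))^2 < 1 := by
      rw [div_pow, one_pow, div_lt_one (by positivity)]
      nlinarith [Nat.cast_nonneg (α := ℝ) n]
    nlinarith
  push_cast
  rw [div_eq_iff h2]
  field_simp
  ring

open Stirling Filter Topology in
private lemma stirling_tele (k : ℕ) (hk : 1 ≤ k) :
    ∀ m, k ≤ m → Real.log (stirlingSeq k) - Real.log (stirlingSeq m) ≤
      1/(4*(k:ℝ)) - 1/(4*(m:ℝ)) := by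
  intro m hm
  induction m, hm using Nat.le_induction with
  | base => simp
  | succ m hm ih =>
    obtain ⟨n, rfl⟩ := Nat.exists_eq_add_of_le (hk.trans hm)
    have hstep := stirling_step n
    have h1 : ((1 + n : ℕ) : ℝ) = (n:ℝ) + 1 := by push_cast; ring
    have h2 : ((1 + n + 1 : ℕ) : ℝ) = (n:ℝ) + 2 := by push_cast; ring
    rw [show 1 + n + 1 = n + 2 by ring, show 1 + n = n + 1 by ring] at *
    rw [h2]
    rw [h1] at ih
    linarith

open Stirling Filter Topology in
private lemma stirling_log_le (k : ℕ) (hk : 1 ≤ k) :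
    Real.log (stirlingSeq k) ≤ Real.log (Real.sqrt π) + 1/(4*(k:ℝ)) := by
  have hπ : Real.sqrt π ≠ 0 := (Real.sqrt_pos.mpr Real.pi_pos).ne'
  have hlim : Tendsto (fun m : ℕ => Real.log (stirlingSeq k) - Real.log (stirlingSeq m)) atTop
      (𝓝 (Real.log (stirlingSeq k) - Real.log (Real.sqrt π))) :=
    tendsto_const_nhds.sub
      (((Real.continuousAt_log hπ).tendsto).comp tendsto_stirlingSeq_sqrt_pi)
  have hub : Real.log (stirlingSeq k) - Real.log (Real.sqrt π) ≤ 1/(4*(k:ℝ)) := by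
    refine le_of_tendsto hlim (eventually_atTop.2 ⟨k, fun m hm => ?_⟩)
    refine (stirling_tele k hk m hm).trans ?_
    have : (0:ℝ) ≤ 1/(4*(m:ℝ)) := by positivity
    linarith
  linarith

private lemma exp_small : Real.exp (-(19/75 : ℝ)) ≤ 11250/14461 := by
  have h := Real.quadratic_le_exp_of_nonneg (by norm_num : (0:ℝ) ≤ 19/75)
  have h' : (14461/11250 : ℝ) ≤ Real.exp (19/75) := by
    have : (1:ℝ) + 19/75 + (19/75)^2/2 = 14461/11250 := by norm_num
    linarith
  rw [Real.exp_neg, inv_le_comm₀ (Real.exp_pos _) (by norm_num)]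
  linarith

open Stirling Filter Topology in
/-- For every integer `k ≥ 1`,
`k! · 4^k · e^{1/25 - 1/6} / √(πk) ≤ (2k)!/k! ≤ k! · 4^k / √(πk)`. -/
theorem factorial_ratio_stirling_bounds (k : ℕ) (hk : 1 ≤ k) :
    (k.factorial : ℝ) * 4 ^ k * Real.exp (1 / 25 - 1 / 6) / Real.sqrt (π * k)
        ≤ ((2 * k).factorial : ℝ) / (k.factorial : ℝ) ∧
      ((2 * k).factorial : ℝ) / (k.factorial : ℝ)
        ≤ (k.factorial : ℝ) * 4 ^ k / Real.sqrt (π * k) := by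
  have hk0 : (0:ℝ) < k := by exact_mod_cast hk
  have hsk : 0 < stirlingSeq k := stirling_pos' k hk
  have hs2k : 0 < stirlingSeq (2*k) := stirling_pos' (2*k) (by omega)
  have hrk : (0:ℝ) < Real.sqrt k := Real.sqrt_pos.mpr hk0
  have hrπ : (0:ℝ) < Real.sqrt π := Real.sqrt_pos.mpr Real.pi_pos
  have hfac : (0:ℝ) < k.factorial := by exact_mod_cast k.factorial_pos
  have hE : (0:ℝ) < ((k:ℝ)/Real.exp 1)^k := by positivity
  have hsq2 : Real.sqrt 2 ^ 2 = 2 := Real.sq_sqrt (by norm_num)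
  have hsqk : Real.sqrt (k:ℝ) ^ 2 = (k:ℝ) := Real.sq_sqrt hk0.le
  -- the identity
  have hid : ((2*k).factorial : ℝ) / (k.factorial : ℝ)
      = ((k.factorial : ℝ) * 4 ^ k) *
        (stirlingSeq (2*k) / (stirlingSeq k ^ 2 * Real.sqrt k)) := by
    rw [stirlingSeq, stirlingSeq]
    have h1 : Real.sqrt (2*((2*k:ℕ):ℝ)) = 2 * Real.sqrt k := by
      push_cast
      rw [show (2:ℝ)*(2*(k:ℝ)) = 2^2 * (k:ℝ) by ring, Real.sqrt_mul (by positivity),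
        Real.sqrt_sq (by norm_num)]
    have h2 : Real.sqrt (2*((k:ℕ):ℝ)) = Real.sqrt 2 * Real.sqrt k :=
      Real.sqrt_mul (by norm_num) _
    have h3 : (((2*k:ℕ):ℝ)/Real.exp 1)^(2*k) = 4^k * (((k:ℝ)/Real.exp 1)^k)^2 := by
      push_cast
      rw [show (2:ℝ)*(k:ℝ)/Real.exp 1 = 2 * ((k:ℝ)/Real.exp 1) by ring, mul_pow,
        show (2:ℝ)^(2*k) = 4^k by rw [pow_mul]; norm_num, ← pow_mul, two_mul, pow_add]
      ring
    rw [h1, h2, h3]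
    rw [div_pow (k.factorial:ℝ), mul_pow, mul_pow, hsq2, hsqk]
    field_simp
    linear_combination hsqk
  have hsqrtπk : Real.sqrt (π * k) = Real.sqrt π * Real.sqrt k :=
    Real.sqrt_mul Real.pi_pos.le _
  constructor
  · -- lower bound
    rcases le_or_gt 3 k with hk3 | hk3
    · -- asymptotic regime
      have h1 := stirling_log_le k hk
      have h2 := stirling_tele k hk (2*k) (by omega)
      have hcast : ((2*k:ℕ):ℝ) = 2*(k:ℝ) := by push_cast; ring
      rw [hcast] at h2
      have hk3' : (3:ℝ) ≤ k := by exact_mod_cast hk3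
      have hsum : 1/(4*(k:ℝ)) + (1/(4*(k:ℝ)) - 1/(4*(2*(k:ℝ)))) = 3/(8*(k:ℝ)) := by
        field_simp
        ring
      have h38 : (3:ℝ)/(8*(k:ℝ)) ≤ 19/150 := by
        rw [div_le_div_iff₀ (by positivity) (by norm_num)]
        linarith
      have hlog : Real.log (stirlingSeq k ^ 2 / stirlingSeq (2*k)) ≤
          Real.log (Real.sqrt π * Real.exp (19/150)) := by
        rw [Real.log_div (by positivity) hs2k.ne', Real.log_pow,
          Real.log_mul hrπ.ne' (Real.exp_ne_zero _), Real.log_exp]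
        push_cast
        linarith
      have hkey : stirlingSeq k ^ 2 ≤ stirlingSeq (2*k) * (Real.sqrt π * Real.exp (19/150)) := by
        have h := (Real.log_le_log_iff (by positivity) (by positivity)).mp hlog
        rw [div_le_iff₀ hs2k] at h
        linarith
      have hexp : Real.exp (-(19/150)) * Real.exp (19/150) = 1 := by
        rw [← Real.exp_add]; norm_num
      have hRlow : Real.exp (-(19/150)) / (Real.sqrt π * Real.sqrt k)
          ≤ stirlingSeq (2*k) / (stirlingSeq k ^ 2 * Real.sqrt k) := by
        rw [div_le_div_iff₀ (by positivity) (by positivity)]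
        calc Real.exp (-(19/150)) * (stirlingSeq k ^ 2 * Real.sqrt k)
            ≤ Real.exp (-(19/150)) *
              ((stirlingSeq (2*k) * (Real.sqrt π * Real.exp (19/150))) * Real.sqrt k) := by
              refine mul_le_mul_of_nonneg_left ?_ (Real.exp_pos _).le
              exact mul_le_mul_of_nonneg_right hkey hrk.le
          _ = stirlingSeq (2*k) * (Real.sqrt π * Real.sqrt k) *
              (Real.exp (-(19/150)) * Real.exp (19/150)) := by ring
          _ = stirlingSeq (2*k) * (Real.sqrt π * Real.sqrt k) := by rw [hexp, mul_one]
      rw [hid, hsqrtπk, show (1:ℝ)/25 - 1/6 = -(19/150) by norm_num, mul_div_assoc]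
      exact mul_le_mul_of_nonneg_left hRlow (by positivity)
    · -- k = 1 or 2
      have hπ : (3.141592 : ℝ) < π := Real.pi_gt_d6
      have hes := exp_small
      have hexppos := Real.exp_pos (-(19/150 : ℝ))
      have hsq : Real.exp (-(19/150 : ℝ)) ^ 2 = Real.exp (-(19/75 : ℝ)) := by
        rw [← Real.exp_nat_mul]
        norm_num
      interval_cases k
      · -- k = 1
        norm_num [Nat.factorial]
        rw [div_le_iff₀ (by positivity : (0:ℝ) < Real.sqrt π)]
        have h : 2 * Real.exp (-(19/150 : ℝ)) ≤ Real.sqrt π := by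
          rw [show (2:ℝ) * Real.exp (-(19/150)) = Real.sqrt ((2 * Real.exp (-(19/150)))^2) from
            (Real.sqrt_sq (by positivity)).symm]
          apply Real.sqrt_le_sqrt
          rw [mul_pow, hsq]
          nlinarith
        nlinarith [Real.sqrt_nonneg π]
      · -- k = 2
        norm_num [Nat.factorial]
        rw [div_le_iff₀ (by positivity : (0:ℝ) < Real.sqrt π * Real.sqrt 2)]
        have h : (8/3 : ℝ) * Real.exp (-(19/150 : ℝ)) ≤ Real.sqrt π * Real.sqrt 2 := by
          rw [← Real.sqrt_mul Real.pi_pos.le]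
          rw [show (8/3:ℝ) * Real.exp (-(19/150)) = Real.sqrt (((8/3) * Real.exp (-(19/150)))^2) from
            (Real.sqrt_sq (by positivity)).symm]
          apply Real.sqrt_le_sqrt
          rw [mul_pow, hsq]
          nlinarith
        nlinarith [Real.sqrt_nonneg π, Real.sqrt_nonneg (2:ℝ),
          mul_nonneg (Real.sqrt_nonneg π) (Real.sqrt_nonneg (2:ℝ))]
  · -- upper bound
    rw [hid, hsqrtπk]
    have h1 : stirlingSeq (2*k) ≤ stirlingSeq k := by
      obtain ⟨n, rfl⟩ := Nat.exists_eq_add_of_le hk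
      have h := stirlingSeq'_antitone (show n ≤ 2*n+1 by omega)
      simp only [Function.comp_apply] at h
      rw [show Nat.succ (2*n+1) = 2*(1+n) from by omega,
        show Nat.succ n = 1+n from by omega] at h
      exact h
    have h2 : Real.sqrt π ≤ stirlingSeq k := sqrt_pi_le_stirling k hk
    have hR : stirlingSeq (2*k) / (stirlingSeq k ^ 2 * Real.sqrt k)
        ≤ 1 / (Real.sqrt π * Real.sqrt k) := by
      rw [div_le_div_iff₀ (by positivity) (by positivity)]
      have h3 : stirlingSeq (2*k) * Real.sqrt π ≤ stirlingSeq k ^ 2 := by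
        calc stirlingSeq (2*k) * Real.sqrt π ≤ stirlingSeq k * stirlingSeq k :=
              mul_le_mul h1 h2 hrπ.le hsk.le
          _ = stirlingSeq k ^ 2 := by ring
      calc stirlingSeq (2*k) * (Real.sqrt π * Real.sqrt k)
          = stirlingSeq (2*k) * Real.sqrt π * Real.sqrt k := by ring
        _ ≤ stirlingSeq k ^ 2 * Real.sqrt k := mul_le_mul_of_nonneg_right h3 hrk.le
        _ = 1 * (stirlingSeq k ^ 2 * Real.sqrt k) := by ring
    calc (k.factorial:ℝ) * 4 ^ k * (stirlingSeq (2*k) / (stirlingSeq k ^ 2 * Real.sqrt k))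
        ≤ (k.factorial:ℝ) * 4 ^ k * (1 / (Real.sqrt π * Real.sqrt k)) :=
          mul_le_mul_of_nonneg_left hR (by positivity)
      _ = (k.factorial:ℝ) * 4 ^ k / (Real.sqrt π * Real.sqrt k) := by ring
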